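/- arXiv:2004.08649 — 3 statements merged into one kernel-verified Lean document; each statement's English description precedes it below -/
import Mathlib

section
/- Let θ₁ > 0, θ₂ ≥ 0, ϑ > 0 be real numbers and let μ be a positive integer. Define f : ℝ → ℝ by f(s) = (θ₁^μ e^{-θ₂} / ϑ^μ) · Σ_{l=0}^∞ (θ₁^l θ₂^l) / (ϑ^l (μ+l-1)! l!) · s^{μ-1+l} e^{-θ₁ s / ϑ} for s ≥ 0. Then for every x ≥ 0, ∫_x^∞ f(s) ds = e^{-θ₂} · Σ_{l=0}^∞ (θ₂^l / l!) · Σ_{n=0}^{l+μ-1} (1/n!) (θ₁ x / ϑ)^n e^{-θ₁ x / ϑ}. -/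
open MeasureTheory Real Nat

section Helpers
open MeasureTheory Real Set Filter Nat


lemma tendsto_pow_mul_exp_neg_mul' (k : ℕ) {c : ℝ} (hc : 0 < c) :
    Tendsto (fun s : ℝ => s ^ k * Real.exp (-c * s)) atTop (nhds 0) := by
  have h := (tendsto_pow_mul_exp_neg_atTop_nhds_zero k).comp
    (tendsto_id.const_mul_atTop hc)
  have heq : (fun s : ℝ => s ^ k * Real.exp (-c * s))
      = fun s : ℝ => (1 / c ^ k) * ((c * s) ^ k * Real.exp (-(c * s))) := by
    funext s
    rw [mul_pow]
    field_simp
  rw [heq]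
  simpa using h.const_mul (1 / c ^ k)

lemma integrableOn_pow_mul_exp' (k : ℕ) {c : ℝ} (hc : 0 < c) (x : ℝ) :
    IntegrableOn (fun s : ℝ => s ^ k * Real.exp (-c * s)) (Set.Ioi x) := by
  apply integrable_of_isBigO_exp_neg (half_pos hc)
    ((continuous_pow k).mul (Real.continuous_exp.comp (by fun_prop))).continuousOn
  have h : Tendsto (fun s : ℝ => (s ^ k * Real.exp (-c * s)) / Real.exp (-(c/2) * s))
      atTop (nhds 0) := by
    have : (fun s : ℝ => (s ^ k * Real.exp (-c * s)) / Real.exp (-(c/2) * s))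
        = fun s : ℝ => s ^ k * Real.exp (-(c/2) * s) := by
      funext s
      rw [mul_div_assoc, ← Real.exp_sub]
      ring_nf
    rw [this]
    exact tendsto_pow_mul_exp_neg_mul' k (half_pos hc)
  exact (Asymptotics.isLittleO_of_tendsto (fun s hs => absurd hs (Real.exp_ne_zero _)) h).isBigO

lemma integral_pow_mul_exp' (k : ℕ) {c : ℝ} (hc : 0 < c) (x : ℝ) :
    ∫ s in Set.Ioi x, s ^ k * Real.exp (-c * s)
      = ((k ! : ℝ) / c ^ (k + 1)) * Real.exp (-c * x) *
          ∑ n ∈ Finset.range (k + 1), (c * x) ^ n / (n ! : ℝ) := by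
  induction k with
  | zero =>
      have hderiv : ∀ s ∈ Set.Ici x,
          HasDerivAt (fun s : ℝ => -Real.exp (-c * s) / c)
            ((fun s : ℝ => s ^ 0 * Real.exp (-c * s)) s) s := by
        intro s _
        have h : HasDerivAt (fun s : ℝ => Real.exp (-c * s)) (-c * Real.exp (-c * s)) s := by
          simpa [mul_comm] using (((hasDerivAt_id s).const_mul (-c)).exp)
        have := (h.neg).div_const c
        refine this.congr_deriv ?_
        field_simp
      have htend : Tendsto (fun s : ℝ => -Real.exp (-c * s) / c) atTop (nhds 0) := by
        have := tendsto_pow_mul_exp_neg_mul' 0 hc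
        simp only [pow_zero, one_mul] at this
        simpa using (this.neg).div_const c
      have := integral_Ioi_of_hasDerivAt_of_tendsto' hderiv
        (integrableOn_pow_mul_exp' 0 hc x) htend
      rw [this]
      simp [Nat.factorial]
      field_simp
  | succ k ih =>
      have hderiv : ∀ s ∈ Set.Ici x,
          HasDerivAt (fun s : ℝ => -(s ^ (k + 1) * Real.exp (-c * s)) / c)
            ((fun s : ℝ => s ^ (k + 1) * Real.exp (-c * s)
              - ((k + 1 : ℝ) / c) * (s ^ k * Real.exp (-c * s))) s) s := by
        intro s _
        have h1 : HasDerivAt (fun s : ℝ => s ^ (k + 1)) ((k + 1 : ℝ) * s ^ k) s := by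
          simpa using hasDerivAt_pow (k + 1) s
        have h2 : HasDerivAt (fun s : ℝ => Real.exp (-c * s)) (-c * Real.exp (-c * s)) s := by
          simpa [mul_comm] using (((hasDerivAt_id s).const_mul (-c)).exp)
        have := ((h1.mul h2).neg).div_const c
        refine this.congr_deriv ?_
        field_simp
        ring
      have htend : Tendsto (fun s : ℝ => -(s ^ (k + 1) * Real.exp (-c * s)) / c)
          atTop (nhds 0) := by
        simpa using ((tendsto_pow_mul_exp_neg_mul' (k + 1) hc).neg).div_const c
      have hint : IntegrableOn (fun s : ℝ => s ^ (k + 1) * Real.exp (-c * s)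
          - ((k + 1 : ℝ) / c) * (s ^ k * Real.exp (-c * s))) (Set.Ioi x) := by
        exact (integrableOn_pow_mul_exp' (k + 1) hc x).sub
          ((integrableOn_pow_mul_exp' k hc x).const_mul _)
      have key := integral_Ioi_of_hasDerivAt_of_tendsto' hderiv hint htend
      rw [integral_sub (integrableOn_pow_mul_exp' (k + 1) hc x)
        ((integrableOn_pow_mul_exp' k hc x).const_mul _),
        integral_const_mul, ih] at key
      have hkey : ∫ s in Set.Ioi x, s ^ (k + 1) * Real.exp (-c * s)
          = x ^ (k + 1) * Real.exp (-c * x) / c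
            + ((k + 1 : ℝ) / c) * (((k ! : ℝ) / c ^ (k + 1)) * Real.exp (-c * x) *
                ∑ n ∈ Finset.range (k + 1), (c * x) ^ n / (n ! : ℝ)) := by
        rw [neg_div] at key
        linarith [key]
      rw [hkey, Finset.sum_range_succ (fun n => (c * x) ^ n / (n ! : ℝ)) (k + 1)]
      have hc' : c ≠ 0 := ne_of_gt hc
      have hfac : ((k + 1)! : ℝ) = (k + 1 : ℝ) * (k ! : ℝ) := by
        push_cast [Nat.factorial_succ]; ring
      have hfacne : ((k ! : ℝ)) ≠ 0 := by positivity
      rw [hfac]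
      generalize (∑ n ∈ Finset.range (k + 1), (c * x) ^ n / (n ! : ℝ)) = S
      generalize Real.exp (-c * x) = E
      rw [mul_pow]
      field_simp
      ring

end Helpers

/-- **Received power statistics (Lemma 1).** If `f` is the κ-μ power fading density of the
received power (with integer shape parameter `μ`, written via the series expansion of the
modified Bessel function), then its upper-tail integral (CCDF) is given by the stated double
series. -/
theorem received_power_ccdf
    (θ₁ θ₂ ϑ : ℝ) (hθ₁ : 0 < θ₁) (hθ₂ : 0 ≤ θ₂) (hϑ : 0 < ϑ)
    (μ : ℕ) (hμ : 0 < μ)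
    (f : ℝ → ℝ)
    (hf : ∀ s : ℝ, 0 ≤ s → f s =
      (θ₁ ^ μ * Real.exp (-θ₂) / ϑ ^ μ) *
        ∑' l : ℕ, (θ₁ ^ l * θ₂ ^ l) / (ϑ ^ l * ((μ + l - 1)! : ℝ) * (l ! : ℝ)) *
          s ^ (μ - 1 + l) * Real.exp (-θ₁ * s / ϑ)) :
    ∀ x : ℝ, 0 ≤ x →
      ∫ s in Set.Ioi x, f s =
        Real.exp (-θ₂) *
          ∑' l : ℕ, (θ₂ ^ l / (l ! : ℝ)) *
            ∑ n ∈ Finset.range (l + μ),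
              (1 / (n ! : ℝ)) * (θ₁ * x / ϑ) ^ n * Real.exp (-(θ₁ * x / ϑ)) := by
  intro x hx
  have hϑ' : ϑ ≠ 0 := ne_of_gt hϑ
  have hθ₁' : θ₁ ≠ 0 := ne_of_gt hθ₁
  set c : ℝ := θ₁ / ϑ with hc
  have hcpos : 0 < c := div_pos hθ₁ hϑ
  set C : ℝ := θ₁ ^ μ * Real.exp (-θ₂) / ϑ ^ μ with hC
  set A : ℝ := ϑ ^ μ / θ₁ ^ μ * Real.exp (-c * x) with hA
  set g : ℕ → ℝ → ℝ := fun l s =>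
    (θ₁ ^ l * θ₂ ^ l) / (ϑ ^ l * ((μ + l - 1)! : ℝ) * (l ! : ℝ)) *
      s ^ (μ - 1 + l) * Real.exp (-θ₁ * s / ϑ) with hg
  set S : ℕ → ℝ := fun l => ∑ n ∈ Finset.range (l + μ), (c * x) ^ n / (n ! : ℝ) with hS
  -- coefficient nonnegativity
  have hcoef : ∀ l : ℕ, 0 ≤ (θ₁ ^ l * θ₂ ^ l) / (ϑ ^ l * ((μ + l - 1)! : ℝ) * (l ! : ℝ)) := by
    intro l
    apply div_nonneg (mul_nonneg (pow_nonneg hθ₁.le _) (pow_nonneg hθ₂ _))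
    positivity
  -- reshaping g
  have hgeq : ∀ l : ℕ, g l = fun s : ℝ =>
      (θ₁ ^ l * θ₂ ^ l) / (ϑ ^ l * ((μ + l - 1)! : ℝ) * (l ! : ℝ)) *
        (s ^ (μ - 1 + l) * Real.exp (-c * s)) := by
    intro l
    funext s
    simp only [hg]
    have h : -θ₁ * s / ϑ = -c * s := by rw [hc]; ring
    rw [h, mul_assoc]
  -- integrability
  have hInt : ∀ l : ℕ, IntegrableOn (g l) (Set.Ioi x) := by
    intro l
    rw [hgeq l]
    exact (integrableOn_pow_mul_exp' _ hcpos x).const_mul _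
  -- value of each integral
  have hVal : ∀ l : ℕ, ∫ s in Set.Ioi x, g l s = A * (θ₂ ^ l / (l ! : ℝ)) * S l := by
    intro l
    rw [hgeq l, integral_const_mul, integral_pow_mul_exp' _ hcpos x]
    rw [show μ - 1 + l + 1 = l + μ from by omega, show μ + l - 1 = μ - 1 + l from by omega]
    simp only [hS, hA]
    rw [hc]
    generalize (∑ n ∈ Finset.range (l + μ), (θ₁ / ϑ * x) ^ n / (n ! : ℝ)) = T
    generalize Real.exp (-(θ₁ / ϑ) * x) = E
    have h1 : ((μ - 1 + l)! : ℝ) ≠ 0 := by positivity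
    have h2 : ((l)! : ℝ) ≠ 0 := by positivity
    rw [div_pow]
    field_simp
    ring
  -- norm integrals coincide with the integrals
  have hNorm : ∀ l : ℕ, (∫ s in Set.Ioi x, ‖g l s‖) = ∫ s in Set.Ioi x, g l s := by
    intro l
    apply setIntegral_congr_fun measurableSet_Ioi
    intro s hs
    have hs0 : (0 : ℝ) ≤ s := le_trans hx (le_of_lt hs)
    apply Real.norm_of_nonneg
    rw [hg]
    exact mul_nonneg (mul_nonneg (hcoef l) (pow_nonneg hs0 _)) (Real.exp_pos _).le
  -- summability of the norm integrals
  have hA0 : 0 ≤ A := by rw [hA]; positivity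
  have hSum : Summable fun l : ℕ => ∫ s in Set.Ioi x, ‖g l s‖ := by
    apply Summable.of_nonneg_of_le (f := fun l : ℕ =>
      A * (θ₂ ^ l / (l ! : ℝ)) * Real.exp (c * x))
    · intro l
      exact integral_nonneg fun s => norm_nonneg _
    · intro l
      rw [hNorm l, hVal l]
      have hq : 0 ≤ A * (θ₂ ^ l / (l ! : ℝ)) :=
        mul_nonneg hA0 (div_nonneg (pow_nonneg hθ₂ _) (by positivity))
      have hle : S l ≤ Real.exp (c * x) := by
        rw [hS]
        exact Real.sum_le_exp_of_nonneg (mul_nonneg hcpos.le hx) _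
      exact mul_le_mul_of_nonneg_left hle hq
    · exact ((Real.summable_pow_div_factorial θ₂).mul_left A).mul_right _
  -- main computation
  have h1 : ∫ s in Set.Ioi x, f s = ∫ s in Set.Ioi x, C * ∑' l : ℕ, g l s := by
    apply setIntegral_congr_fun measurableSet_Ioi
    intro s hs
    exact hf s (le_trans hx (le_of_lt hs))
  rw [h1, integral_const_mul,
    ← integral_tsum_of_summable_integral_norm (fun l => hInt l) hSum]
  rw [← tsum_mul_left, ← tsum_mul_left]
  apply tsum_congr
  intro l
  rw [hVal l]
  have hIS : (∑ n ∈ Finset.range (l + μ),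
      (1 / (n ! : ℝ)) * (θ₁ * x / ϑ) ^ n * Real.exp (-(θ₁ * x / ϑ)))
      = Real.exp (-c * x) * S l := by
    rw [show θ₁ * x / ϑ = c * x from by rw [hc]; ring, hS, Finset.mul_sum]
    refine Finset.sum_congr rfl fun n _ => ?_
    rw [neg_mul]
    ring
  rw [hIS, hC, hA]
  generalize S l = T
  field_simp
end

section
/- Let θ₁ > 0, θ₂ ≥ 0 be real, μ a positive integer, k a natural number, and s ≥ 0 a real number. With f_H the κ-μ power fading density with parameters θ₁, θ₂, μ, one has ∫_0^∞ h^k e^{-s h} f_H(h) dh = (μ)_k · θ₁^μ · e^{-θ₂} · (s + θ₁)^{-(k+μ)} · ₁F₁(k+μ; μ; θ₁θ₂/(s+θ₁)), where (μ)_k is the ascending Pochhammer symbol. -/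
open MeasureTheory Real Nat Polynomial

noncomputable def hyp1F1 (a b x : ℝ) : ℝ :=
  ∑' j : ℕ, ((ascPochhammer ℝ j).eval a / (ascPochhammer ℝ j).eval b) * x ^ j / (j ! : ℝ)

lemma gamma_int (n : ℕ) {r : ℝ} (hr : 0 < r) :
    ∫ t in Set.Ioi (0:ℝ), t ^ n * Real.exp (-(r * t)) = (n ! : ℝ) / r ^ (n+1) := by
  have h := Real.integral_rpow_mul_exp_neg_mul_Ioi (a := n + 1) (by positivity) hr
  rw [show ((n:ℝ) + 1 - 1) = (n:ℝ) by ring] at h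
  have : ∫ t in Set.Ioi (0:ℝ), t ^ n * Real.exp (-(r * t))
      = ∫ t in Set.Ioi (0:ℝ), t ^ (n:ℝ) * Real.exp (-(r * t)) := by
    refine setIntegral_congr_fun measurableSet_Ioi fun t ht => ?_
    rw [Real.rpow_natCast]
  rw [this, h, show ((n:ℝ) + 1) = ((n+1 : ℕ) : ℝ) by push_cast; ring, Real.rpow_natCast]
  rw [show ((n+1:ℕ):ℝ) = (n:ℝ)+1 by push_cast; ring, Real.Gamma_nat_eq_factorial,
    one_div, inv_pow]
  ring

lemma int_on (n : ℕ) {r : ℝ} (hr : 0 < r) :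
    IntegrableOn (fun t : ℝ => t ^ n * Real.exp (-(r * t))) (Set.Ioi 0) := by
  have := integrableOn_rpow_mul_exp_neg_mul_rpow (p := 1) (s := n) (b := r)
    (lt_of_lt_of_le neg_one_lt_zero (Nat.cast_nonneg n)) one_pos hr
  simp only [Real.rpow_one] at this
  refine this.congr_fun (fun t ht => ?_) measurableSet_Ioi
  beta_reduce; rw [Real.rpow_natCast, neg_mul]

lemma choose_le_two_pow' (n k : ℕ) : n.choose k ≤ 2 ^ n := by
  rcases le_or_gt k n with h | h
  · calc n.choose k ≤ ∑ m ∈ Finset.range (n+1), n.choose m :=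
        Finset.single_le_sum (fun i _ => Nat.zero_le _) (Finset.mem_range.2 (by omega))
    _ = 2 ^ n := Nat.sum_range_choose n
  · rw [Nat.choose_eq_zero_of_lt h]; exact Nat.zero_le _

lemma fact_le (m k l : ℕ) : ((m+l+k)! : ℝ) ≤ 2 ^ (m+l+k) * k ! * (m+l)! := by
  have h : (m+l+k)! = (m+l+k).choose k * (m+l)! * k ! :=
    (Nat.add_choose_mul_factorial_mul_factorial (m+l) k).symm
  have h2 : (m+l+k).choose k ≤ 2 ^ (m+l+k) := choose_le_two_pow' _ _
  have : (m+l+k)! ≤ 2 ^ (m+l+k) * k ! * (m+l)! := by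
    rw [h]; calc (m+l+k).choose k * (m+l)! * k ! ≤ 2 ^ (m+l+k) * (m+l)! * k ! := by gcongr
    _ = 2 ^ (m+l+k) * k ! * (m+l)! := by ring
  exact_mod_cast this

lemma summable_aux (m k : ℕ) {y : ℝ} (hy : 0 ≤ y) :
    Summable (fun l : ℕ => ((m + l + k)! : ℝ) / (((m + l)! : ℝ) * (l ! : ℝ)) * y ^ l) := by
  have hg : Summable (fun l : ℕ => (2 ^ (m+k) * (k ! : ℝ)) * ((2*y) ^ l / l !)) :=
    (Real.summable_pow_div_factorial (2*y)).mul_left _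
  refine Summable.of_nonneg_of_le (fun l => ?_) (fun l => ?_) hg
  · exact mul_nonneg (div_nonneg (Nat.cast_nonneg _)
      (mul_nonneg (Nat.cast_nonneg _) (Nat.cast_nonneg _))) (pow_nonneg hy l)
  · have hb : (0:ℝ) < (m+l)! := by exact_mod_cast Nat.factorial_pos _
    have hl : (0:ℝ) < l ! := by exact_mod_cast Nat.factorial_pos _
    calc ((m+l+k)! : ℝ) / (((m+l)! : ℝ) * (l ! : ℝ)) * y ^ l
        ≤ (2 ^ (m+l+k) * k ! * (m+l)!) / (((m+l)! : ℝ) * (l ! : ℝ)) * y ^ l := by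
          gcongr; exact fact_le m k l
      _ = (2 ^ (m+k) * (k ! : ℝ)) * ((2*y) ^ l / l !) := by
          field_simp; ring

/-- The weighted Laplace transform `E[H^k e^(-sH)]` of κ-μ power fading with positive integer
shape parameter `μ`: step (c) in the proof of Lemma 2 (Appendix B). -/
theorem kappa_mu_weighted_laplace_transform
    (θ₁ θ₂ : ℝ) (hθ₁ : 0 < θ₁) (hθ₂ : 0 ≤ θ₂) (μ : ℕ) (hμ : 0 < μ)
    (k : ℕ) (s : ℝ) (hs : 0 ≤ s)
    (fH : ℝ → ℝ)
    (hfH : ∀ h : ℝ, 0 ≤ h → fH h =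
      θ₁ ^ μ * Real.exp (-θ₂) *
        ∑' l : ℕ, (θ₁ * θ₂) ^ l / (((μ + l - 1)! : ℝ) * (l ! : ℝ)) *
          h ^ (μ + l - 1) * Real.exp (-θ₁ * h)) :
    ∫ h in Set.Ioi (0 : ℝ), h ^ k * Real.exp (-s * h) * fH h =
      (ascPochhammer ℝ k).eval (μ : ℝ) * θ₁ ^ μ * Real.exp (-θ₂) *
        ((s + θ₁) ^ (k + μ))⁻¹ * hyp1F1 ((k : ℝ) + (μ : ℝ)) (μ : ℝ) (θ₁ * θ₂ / (s + θ₁)) := by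
  obtain ⟨m, rfl⟩ := Nat.exists_eq_succ_of_ne_zero hμ.ne'
  have hidx : ∀ l : ℕ, m + 1 + l - 1 = m + l := fun l => by omega
  simp only [hidx] at hfH
  have hr : (0:ℝ) < s + θ₁ := by positivity
  set r : ℝ := s + θ₁ with hrdef
  set x : ℝ := θ₁ * θ₂ with hxdef
  have hx : 0 ≤ x := mul_nonneg hθ₁.le hθ₂
  set C : ℝ := θ₁ ^ (m+1) * Real.exp (-θ₂) with hCdef
  have hC : 0 ≤ C := by positivity
  -- the summand functions
  set G : ℕ → ℝ → ℝ :=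
    fun l h => C * (x ^ l / (((m+l)! : ℝ) * (l ! : ℝ))) * (h ^ (m + l + k) * Real.exp (-(r * h)))
    with hGdef
  -- Step A : rewrite integrand
  have hcong : ∀ h ∈ Set.Ioi (0:ℝ), h ^ k * Real.exp (-s * h) * fH h = ∑' l, G l h := by
    intro h hh
    rw [hfH h (le_of_lt hh)]
    calc h ^ k * Real.exp (-s*h) *
          (C * ∑' l, x ^ l / (((m+l)! : ℝ) * (l ! : ℝ)) * h ^ (m+l) * Real.exp (-θ₁*h))
        = ∑' l, (h ^ k * Real.exp (-s*h) * C) *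
            (x ^ l / (((m+l)! : ℝ) * (l ! : ℝ)) * h ^ (m+l) * Real.exp (-θ₁*h)) := by
          rw [tsum_mul_left]; ring
      _ = ∑' l, G l h := by
          refine tsum_congr fun l => ?_
          have hexp : Real.exp (-s*h) * Real.exp (-θ₁*h) = Real.exp (-(r*h)) := by
            rw [← Real.exp_add]; congr 1; rw [hrdef]; ring
          simp only [hGdef]
          rw [pow_add h m l]
          rw [← hexp]
          ring
  rw [setIntegral_congr_fun measurableSet_Ioi hcong]
  -- Step B : swap integral and sum
  have hint : ∀ l, Integrable (G l) (volume.restrict (Set.Ioi 0)) := fun l =>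
    (int_on (m+l+k) hr).const_mul _
  have hnormval : ∀ l, (∫ h in Set.Ioi (0:ℝ), ‖G l h‖)
      = C * (x ^ l / (((m+l)! : ℝ) * (l ! : ℝ))) * (((m+l+k)! : ℝ) / r ^ (m+l+k+1)) := by
    intro l
    have h1 : ∀ h ∈ Set.Ioi (0:ℝ), ‖G l h‖
        = C * (x ^ l / (((m+l)! : ℝ) * (l ! : ℝ))) * (h ^ (m + l + k) * Real.exp (-(r * h))) := by
      intro h hh
      rw [Real.norm_of_nonneg]
      refine mul_nonneg (mul_nonneg hC (div_nonneg (pow_nonneg hx l)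
        (mul_nonneg (Nat.cast_nonneg _) (Nat.cast_nonneg _))))
        (mul_nonneg (pow_nonneg (le_of_lt hh) _) (Real.exp_nonneg _))
    rw [setIntegral_congr_fun measurableSet_Ioi h1, integral_const_mul, gamma_int _ hr]
  have hsum : Summable fun l => ∫ h in Set.Ioi (0:ℝ), ‖G l h‖ := by
    have heq : ∀ l : ℕ, C * (x ^ l / (((m+l)! : ℝ) * (l ! : ℝ))) * (((m+l+k)! : ℝ) / r ^ (m+l+k+1))
        = (C / r ^ (m+k+1)) * (((m+l+k)! : ℝ) / (((m+l)! : ℝ) * (l ! : ℝ)) * (x/r) ^ l) := by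
      intro l
      have hb : ((m+l)! : ℝ) ≠ 0 := by exact_mod_cast (Nat.factorial_pos _).ne'
      have hl : ((l)! : ℝ) ≠ 0 := by exact_mod_cast (Nat.factorial_pos _).ne'
      rw [show m+l+k+1 = m+k+1+l by omega, pow_add r, div_pow]
      field_simp
    simp_rw [hnormval, heq]
    exact ((summable_aux m k (div_nonneg hx hr.le)).mul_left _)
  rw [← integral_tsum_of_summable_integral_norm hint hsum]
  -- Step C : evaluate each integral
  have hval : ∀ l, (∫ h in Set.Ioi (0:ℝ), G l h)
      = C * (x ^ l / (((m+l)! : ℝ) * (l ! : ℝ))) * (((m+l+k)! : ℝ) / r ^ (m+l+k+1)) := by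
    intro l
    simp only [hGdef]
    rw [integral_const_mul, gamma_int _ hr]
  -- Step D : match with the RHS
  rw [tsum_congr hval]
  rw [hyp1F1, ← tsum_mul_left]
  refine tsum_congr fun l => ?_
  -- Pochhammer evaluations
  have hP : (ascPochhammer ℝ k).eval ((m+1 : ℕ) : ℝ) = ((m+1).ascFactorial k : ℝ) := by
    rw [← ascPochhammer_eval_cast, ascPochhammer_nat_eq_ascFactorial]
  have hB : (ascPochhammer ℝ l).eval ((k:ℝ) + ((m+1:ℕ):ℝ)) = ((k+m+1).ascFactorial l : ℝ) := by
    rw [show (k:ℝ) + ((m+1:ℕ):ℝ) = ((k+m+1 : ℕ) : ℝ) by push_cast; ring,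
      ← ascPochhammer_eval_cast, ascPochhammer_nat_eq_ascFactorial]
  have hD : (ascPochhammer ℝ l).eval ((m+1 : ℕ) : ℝ) = ((m+1).ascFactorial l : ℝ) := by
    rw [← ascPochhammer_eval_cast, ascPochhammer_nat_eq_ascFactorial]
  rw [hP, hB, hD]
  -- ascFactorial values
  have ha : ((m+1).ascFactorial k : ℝ) = ((m+k)! : ℝ) / (m ! : ℝ) := by
    rw [eq_div_iff (by exact_mod_cast (Nat.factorial_pos m).ne')]
    exact_mod_cast (mul_comm (m !) ((m+1).ascFactorial k) ▸ Nat.factorial_mul_ascFactorial m k)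
  have hd : ((m+1).ascFactorial l : ℝ) = ((m+l)! : ℝ) / (m ! : ℝ) := by
    rw [eq_div_iff (by exact_mod_cast (Nat.factorial_pos m).ne')]
    exact_mod_cast (mul_comm (m !) ((m+1).ascFactorial l) ▸ Nat.factorial_mul_ascFactorial m l)
  have hb : ((k+m+1).ascFactorial l : ℝ) = ((k+m+l)! : ℝ) / ((k+m)! : ℝ) := by
    rw [eq_div_iff (by exact_mod_cast (Nat.factorial_pos (k+m)).ne')]
    exact_mod_cast (mul_comm ((k+m)!) ((k+m+1).ascFactorial l) ▸
      Nat.factorial_mul_ascFactorial (k+m) l)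
  rw [ha, hb, hd, show m+l+k = k+m+l by omega]
  have h1 : (m ! : ℝ) ≠ 0 := by exact_mod_cast (Nat.factorial_pos _).ne'
  have h2 : ((m+l)! : ℝ) ≠ 0 := by exact_mod_cast (Nat.factorial_pos _).ne'
  have h3 : ((k+m)! : ℝ) ≠ 0 := by exact_mod_cast (Nat.factorial_pos _).ne'
  have h4 : ((l)! : ℝ) ≠ 0 := by exact_mod_cast (Nat.factorial_pos _).ne'
  have h5 : r ≠ 0 := hr.ne'
  rw [show k+m+l+1 = k+(m+1)+l by omega, pow_add r, div_pow, hCdef]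
  field_simp
  ring
end

section
/- Let X be an integrable real-valued random variable on a probability space and β ∈ (0, 1). Define φ(u) = u + (1-β)^{-1} E[max(X - u, 0)] for u ∈ ℝ, and let q = inf{u ∈ ℝ : P(X ≤ u) ≥ β} be the β-quantile of X. Then φ(q) ≤ φ(u) for every u ∈ ℝ; that is, the β-quantile minimizes φ. -/
open MeasureTheory ProbabilityTheory Real

lemma cvar_integral_bounds {Ω : Type*} [MeasureSpace Ω] [IsProbabilityMeasure (ℙ : Measure Ω)]
    (Y : Ω → ℝ) (hYm : Measurable Y) (hYint : Integrable Y) (a b : ℝ) (hab : a ≤ b) :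
    (b - a) * (ℙ {ω | b ≤ Y ω}).toReal ≤ (∫ ω, max (Y ω - a) 0) - ∫ ω, max (Y ω - b) 0 ∧
    (∫ ω, max (Y ω - a) 0) - ∫ ω, max (Y ω - b) 0 ≤ (b - a) * (ℙ {ω | a < Y ω}).toReal := by
  have ia : Integrable (fun ω => max (Y ω - a) 0) := (hYint.sub (integrable_const a)).pos_part
  have ib : Integrable (fun ω => max (Y ω - b) 0) := (hYint.sub (integrable_const b)).pos_part
  have hsub : (∫ ω, max (Y ω - a) 0) - ∫ ω, max (Y ω - b) 0
      = ∫ ω, (max (Y ω - a) 0 - max (Y ω - b) 0) := (integral_sub ia ib).symm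
  have hmb : MeasurableSet {ω | b ≤ Y ω} := measurableSet_le measurable_const hYm
  have hma : MeasurableSet {ω | a < Y ω} := measurableSet_lt measurable_const hYm
  constructor
  · rw [hsub, mul_comm, ← smul_eq_mul, ← measureReal_def, ← integral_indicator_const (b - a) hmb]
    refine integral_mono ((integrable_const (b - a)).indicator hmb) (ia.sub ib) fun ω => ?_
    simp only [Set.indicator_apply, Set.mem_setOf_eq]
    split_ifs with h
    · have h1 : max (Y ω - a) 0 = Y ω - a := max_eq_left (by linarith)
      have h2 : max (Y ω - b) 0 = Y ω - b := max_eq_left (by linarith)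
      linarith
    · have h2 : max (Y ω - b) 0 ≤ max (Y ω - a) 0 := max_le_max (by linarith) le_rfl
      linarith
  · rw [hsub, mul_comm, ← smul_eq_mul, ← measureReal_def, ← integral_indicator_const (b - a) hma]
    refine integral_mono (ia.sub ib) ((integrable_const (b - a)).indicator hma) fun ω => ?_
    simp only [Set.indicator_apply, Set.mem_setOf_eq]
    split_ifs with h
    · have h1 : max (Y ω - a) 0 = Y ω - a := max_eq_left (by linarith)
      have h2 : Y ω - b ≤ max (Y ω - b) 0 := le_max_left _ _
      linarith
    · have h1 : max (Y ω - a) 0 = 0 := max_eq_right (by linarith)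
      have h2 : (0:ℝ) ≤ max (Y ω - b) 0 := le_max_right _ _
      linarith

/-- Variational characterization of the quantile used in Equation (9) of the paper: the
`β`-quantile of an integrable random variable `X` minimizes
`u ↦ u + (1-β)⁻¹ E[max(X - u, 0)]`. -/
theorem quantile_minimizes_cvar_objective
    {Ω : Type*} [MeasureSpace Ω] [IsProbabilityMeasure (ℙ : Measure Ω)]
    (X : Ω → ℝ) (hX : Integrable X) (β : ℝ) (hβ : β ∈ Set.Ioo (0 : ℝ) 1)
    (φ : ℝ → ℝ)
    (hφ : ∀ u : ℝ, φ u = u + (1 - β)⁻¹ * ∫ ω, max (X ω - u) 0)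
    (q : ℝ)
    (hq : q = sInf {u : ℝ | ENNReal.ofReal β ≤ ℙ {ω | X ω ≤ u}}) :
    ∀ u : ℝ, φ q ≤ φ u := by
  obtain ⟨hβ0, hβ1⟩ := hβ
  have h1β : (0:ℝ) < 1 - β := by linarith
  -- measurable version of X
  have hXY : X =ᵐ[ℙ] hX.1.mk X := hX.1.ae_eq_mk
  set Y := hX.1.mk X with hYdef
  have hYm : Measurable Y := hX.1.stronglyMeasurable_mk.measurable
  have hYint : Integrable Y := hX.congr hXY
  have hmeq : ∀ t : ℝ, ℙ {ω | X ω ≤ t} = ℙ {ω | Y ω ≤ t} := fun t =>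
    measure_congr (hXY.mono fun ω h => by
      change (X ω ≤ t) = (Y ω ≤ t)
      rw [h])
  have hgeq : ∀ t : ℝ, (∫ ω, max (X ω - t) 0) = ∫ ω, max (Y ω - t) 0 := fun t =>
    integral_congr_ae (hXY.mono fun ω h => by simp only [h])
  simp only [hmeq] at hq
  set S : Set ℝ := {u : ℝ | ENNReal.ofReal β ≤ ℙ {ω | Y ω ≤ u}} with hSdef
  -- S is nonempty
  have hβlt1 : ENNReal.ofReal β < 1 := by
    rw [← ENNReal.ofReal_one]; exact ENNReal.ofReal_lt_ofReal_iff_of_nonneg hβ0.le |>.2 hβ1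
  have hS_ne : S.Nonempty := by
    have hmono : Monotone (fun n : ℕ => {ω | Y ω ≤ (n:ℝ)}) := by
      intro i j hij ω h
      simp only [Set.mem_setOf_eq] at *
      exact le_trans h (Nat.cast_le.2 hij)
    have hU : (⋃ n : ℕ, {ω | Y ω ≤ (n:ℝ)}) = Set.univ := by
      ext ω
      simp only [Set.mem_iUnion, Set.mem_setOf_eq, Set.mem_univ, iff_true]
      exact exists_nat_ge (Y ω)
    have hsup : (⨆ n : ℕ, ℙ {ω | Y ω ≤ (n:ℝ)}) = 1 := by
      rw [← hmono.measure_iUnion, hU, measure_univ]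
    rw [← hsup] at hβlt1
    obtain ⟨n, hn⟩ := lt_iSup_iff.1 hβlt1
    exact ⟨n, hn.le⟩
  -- S is bounded below
  have hS_bdd : BddBelow S := by
    have hanti : Antitone (fun n : ℕ => {ω | Y ω ≤ -(n:ℝ)}) := by
      intro i j hij ω h
      simp only [Set.mem_setOf_eq] at *
      have : (i:ℝ) ≤ j := Nat.cast_le.2 hij
      linarith
    have hI : (⋂ n : ℕ, {ω | Y ω ≤ -(n:ℝ)}) = ∅ := by
      ext ω
      simp only [Set.mem_iInter, Set.mem_setOf_eq, Set.mem_empty_iff_false, iff_false, not_forall]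
      obtain ⟨n, hn⟩ := exists_nat_ge (-Y ω + 1)
      exact ⟨n, by push_neg; linarith⟩
    have hinf : (⨅ n : ℕ, ℙ {ω | Y ω ≤ -(n:ℝ)}) = 0 := by
      rw [← hanti.measure_iInter (fun n => (measurableSet_le hYm measurable_const).nullMeasurableSet)
        ⟨0, measure_ne_top _ _⟩, hI, measure_empty]
    have h0 : (⨅ n : ℕ, ℙ {ω | Y ω ≤ -(n:ℝ)}) < ENNReal.ofReal β := by
      rw [hinf]; exact ENNReal.ofReal_pos.2 hβ0
    obtain ⟨n, hn⟩ := iInf_lt_iff.1 h0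
    refine ⟨-(n:ℝ), fun v hv => ?_⟩
    by_contra hlt
    push_neg at hlt
    exact absurd (le_trans hv (measure_mono fun ω h => le_trans h hlt.le)) hn.not_ge
  have hstep : ∀ i j : ℕ, i ≤ j → (1:ℝ)/(j+1) ≤ 1/(i+1) := by
    intro i j hij
    have : (i:ℝ) ≤ j := Nat.cast_le.2 hij
    apply one_div_le_one_div_of_le (by positivity) (by linarith)
  -- P(Y ≤ q) ≥ β
  have hA : ENNReal.ofReal β ≤ ℙ {ω | Y ω ≤ q} := by
    have hanti : Antitone (fun n : ℕ => {ω | Y ω ≤ q + 1/(n+1:ℝ)}) := by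
      intro i j hij ω h
      simp only [Set.mem_setOf_eq] at *
      have := hstep i j hij
      linarith
    have hI : {ω | Y ω ≤ q} = ⋂ n : ℕ, {ω | Y ω ≤ q + 1/(n+1:ℝ)} := by
      ext ω
      simp only [Set.mem_iInter, Set.mem_setOf_eq]
      constructor
      · intro h n; have : (0:ℝ) < 1/(n+1) := by positivity
        linarith
      · intro h
        by_contra hlt
        push_neg at hlt
        obtain ⟨n, hn⟩ := exists_nat_one_div_lt (sub_pos.2 hlt)
        exact absurd (h n) (by push_neg; linarith)
    rw [hI, hanti.measure_iInter
      (fun n => (measurableSet_le hYm measurable_const).nullMeasurableSet)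
      ⟨0, measure_ne_top _ _⟩]
    refine le_iInf fun n => ?_
    have hqlt : sInf S < q + 1/(n+1:ℝ) := by
      rw [← hq]
      have : (0:ℝ) < 1/(n+1:ℝ) := by positivity
      linarith
    obtain ⟨v, hvS, hvlt⟩ := (csInf_lt_iff hS_bdd hS_ne).1 hqlt
    exact le_trans hvS (measure_mono fun ω h => le_trans h hvlt.le)
  -- P(Y < q) ≤ β
  have hB : ℙ {ω | Y ω < q} ≤ ENNReal.ofReal β := by
    have hmono : Monotone (fun n : ℕ => {ω | Y ω ≤ q - 1/(n+1:ℝ)}) := by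
      intro i j hij ω h
      simp only [Set.mem_setOf_eq] at *
      have := hstep i j hij
      linarith
    have hU : {ω | Y ω < q} = ⋃ n : ℕ, {ω | Y ω ≤ q - 1/(n+1:ℝ)} := by
      ext ω
      simp only [Set.mem_iUnion, Set.mem_setOf_eq]
      constructor
      · intro h
        obtain ⟨n, hn⟩ := exists_nat_one_div_lt (sub_pos.2 h)
        exact ⟨n, by linarith⟩
      · rintro ⟨n, hn⟩
        have : (0:ℝ) < 1/(n+1) := by positivity
        linarith
    rw [hU, hmono.measure_iUnion]
    refine iSup_le fun n => ?_
    have hnotS : q - 1/(n+1:ℝ) ∉ S := fun hmem => by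
      have := csInf_le hS_bdd hmem
      rw [← hq] at this
      have h0 : (0:ℝ) < 1/(n+1) := by positivity
      linarith
    exact le_of_not_ge fun hle => hnotS hle
  -- convert to real numbers
  have hne1 : (ℙ {ω | Y ω ≤ q}) ≠ ⊤ := measure_ne_top _ _
  have hFq : β ≤ (ℙ {ω | Y ω ≤ q}).toReal :=
    (ENNReal.ofReal_le_iff_le_toReal hne1).1 hA
  have hGq : (ℙ {ω | Y ω < q}).toReal ≤ β :=
    ENNReal.toReal_le_of_le_ofReal hβ0.le hB
  have hcompl1 : (ℙ {ω | q < Y ω}).toReal = 1 - (ℙ {ω | Y ω ≤ q}).toReal := by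
    have hs : MeasurableSet {ω | Y ω ≤ q} := measurableSet_le hYm measurable_const
    have hc : {ω | q < Y ω} = {ω | Y ω ≤ q}ᶜ := by ext ω; simp [Set.mem_setOf_eq, not_le]
    have := measure_add_measure_compl (μ := ℙ) hs
    have htr := congrArg ENNReal.toReal this
    rw [ENNReal.toReal_add (measure_ne_top _ _) (measure_ne_top _ _)] at htr
    simp only [measure_univ, ENNReal.toReal_one] at htr
    rw [hc]; linarith
  have hcompl2 : (ℙ {ω | q ≤ Y ω}).toReal = 1 - (ℙ {ω | Y ω < q}).toReal := by
    have hs : MeasurableSet {ω | Y ω < q} := measurableSet_lt hYm measurable_const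
    have hc : {ω | q ≤ Y ω} = {ω | Y ω < q}ᶜ := by ext ω; simp [Set.mem_setOf_eq, not_lt]
    have := measure_add_measure_compl (μ := ℙ) hs
    have htr := congrArg ENNReal.toReal this
    rw [ENNReal.toReal_add (measure_ne_top _ _) (measure_ne_top _ _)] at htr
    simp only [measure_univ, ENNReal.toReal_one] at htr
    rw [hc]; linarith
  -- main argument
  intro u
  rw [hφ u, hφ q, hgeq u, hgeq q]
  have hcinv : (1 - β)⁻¹ * (1 - β) = 1 := inv_mul_cancel₀ h1β.ne'
  have hc0 : (0:ℝ) < (1 - β)⁻¹ := inv_pos.2 h1β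
  rcases le_total q u with hle | hle
  · obtain ⟨-, hub⟩ := cvar_integral_bounds Y hYm hYint q u hle
    rw [hcompl1] at hub
    have h1 : (∫ ω, max (Y ω - q) 0) - ∫ ω, max (Y ω - u) 0 ≤ (u - q) * (1 - β) := by
      calc (∫ ω, max (Y ω - q) 0) - ∫ ω, max (Y ω - u) 0
          ≤ (u - q) * (1 - (ℙ {ω | Y ω ≤ q}).toReal) := hub
        _ ≤ (u - q) * (1 - β) := by
            apply mul_le_mul_of_nonneg_left (by linarith) (by linarith)
    nlinarith [mul_le_mul_of_nonneg_left h1 hc0.le]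
  · obtain ⟨hlb, -⟩ := cvar_integral_bounds Y hYm hYint u q hle
    rw [hcompl2] at hlb
    have h1 : (q - u) * (1 - β) ≤ (∫ ω, max (Y ω - u) 0) - ∫ ω, max (Y ω - q) 0 := by
      calc (q - u) * (1 - β)
          ≤ (q - u) * (1 - (ℙ {ω | Y ω < q}).toReal) := by
            apply mul_le_mul_of_nonneg_left (by linarith) (by linarith)
        _ ≤ (∫ ω, max (Y ω - u) 0) - ∫ ω, max (Y ω - q) 0 := hlb
    nlinarith [mul_le_mul_of_nonneg_left h1 hc0.le]
end
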